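/- If A ∈ ℝ^{n×n} is Hurwitz and C·exp(tA) is entrywise nonnegative for all t ≥ 0 where C ∈ ℝ^{k×n}, then −C A⁻¹ is entrywise nonnegative. -/

import Mathlib

open Matrix

open Filter Topology in
private lemma aux_coeff_tendsto (μ : ℂ) (hμ : μ.re < 0) (j : ℕ) :
    Tendsto (fun T : ℝ => Complex.exp ((T : ℂ) * μ) * ((j.factorial : ℂ)⁻¹ * (T : ℂ) ^ j))
      atTop (𝓝 0) := by
  apply squeeze_zero_norm'
    (a := fun T : ℝ => (j.factorial : ℝ)⁻¹ * (T ^ (j : ℝ) * Real.exp (-(-μ.re) * T)))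
  · filter_upwards [eventually_ge_atTop (0 : ℝ)] with T hT
    have h1 : ‖Complex.exp ((T : ℂ) * μ)‖ = Real.exp (T * μ.re) := by
      rw [Complex.norm_exp]
      congr 1
      simp [Complex.mul_re]
    have h2 : ‖(T : ℂ)‖ = T := by
      rw [Complex.norm_real, Real.norm_eq_abs, abs_of_nonneg hT]
    rw [norm_mul, norm_mul, norm_pow, h1, h2, norm_inv, Complex.norm_natCast,
      Real.rpow_natCast]
    rw [neg_neg]
    ring_nf
    exact le_of_eq (by ring)
  · have h := (tendsto_rpow_mul_exp_neg_mul_atTop_nhds_zero (j : ℝ) (-μ.re)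
      (by linarith)).const_mul ((j.factorial : ℝ)⁻¹)
    simpa using h

open Filter Topology NormedSpace in
private lemma aux_mulVec_tendsto {n : ℕ} (M : Matrix (Fin n) (Fin n) ℂ)
    (h : ∀ μ : ℂ, μ ∈ spectrum ℂ M → μ.re < 0) (v : Fin n → ℂ) :
    Tendsto (fun T : ℝ => NormedSpace.exp ((T : ℂ) • M) *ᵥ v) atTop (𝓝 0) := by
  letI : SeminormedRing (Matrix (Fin n) (Fin n) ℂ) := Matrix.linftyOpSemiNormedRing
  letI : NormedRing (Matrix (Fin n) (Fin n) ℂ) := Matrix.linftyOpNormedRing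
  letI : NormedAlgebra ℂ (Matrix (Fin n) (Fin n) ℂ) := Matrix.linftyOpNormedAlgebra
  set f : Module.End ℂ (Fin n → ℂ) := Matrix.toLinAlgEquiv' M with hfdef
  have hv : v ∈ ⨆ μ : ℂ, f.maxGenEigenspace μ := by
    rw [Module.End.iSup_maxGenEigenspace_eq_top]; trivial
  refine Submodule.iSup_induction
    (motive := fun w => Tendsto (fun T : ℝ => NormedSpace.exp ((T : ℂ) • M) *ᵥ w) atTop (𝓝 0))
    _ hv ?_ ?_ ?_
  · intro μ w hw
    rcases eq_or_ne w 0 with rfl | hw0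
    · simp only [Matrix.mulVec_zero]
      exact tendsto_const_nhds
    obtain ⟨K, hK⟩ := (Module.End.mem_maxGenEigenspace _ _ _).mp hw
    have hμ : μ.re < 0 := by
      apply h
      rw [← AlgEquiv.spectrum_eq (Matrix.toLinAlgEquiv' (R := ℂ) (n := Fin n)) M, show Matrix.toLinAlgEquiv' M = f from rfl,
        ← Module.End.hasEigenvalue_iff_mem_spectrum]
      have hKpos : ((f - μ • 1) ^ (K + 1)) v = 0 → True := fun _ => trivial
      refine Module.End.hasEigenvalue_of_hasGenEigenvalue (k := K + 1) ?_
      rw [Module.End.hasGenEigenvalue_iff]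
      refine Submodule.ne_bot_iff _ |>.mpr ⟨w, ?_, hw0⟩
      rw [Module.End.mem_genEigenspace_nat]
      calc ((f - μ • 1) ^ (K + 1)) w
          = (f - μ • 1) (((f - μ • 1) ^ K) w) := by
            rw [pow_succ']; rfl
        _ = 0 := by rw [hK, map_zero]
    set N : Matrix (Fin n) (Fin n) ℂ := M - μ • 1 with hNdef
    have hNw : N ^ K *ᵥ w = 0 := by
      have h1 : Matrix.toLinAlgEquiv' (N ^ K) = (f - μ • 1) ^ K := by
        rw [hfdef, map_pow, hNdef, map_sub, _root_.map_smul, _root_.map_one]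
      calc N ^ K *ᵥ w = (Matrix.toLinAlgEquiv' (N ^ K)) w :=
            (Matrix.toLinAlgEquiv'_apply _ _).symm
        _ = 0 := by rw [h1]; exact hK
    have hrep : ∀ T : ℝ, NormedSpace.exp ((T : ℂ) • M) *ᵥ w
        = ∑ j ∈ Finset.range K,
            (Complex.exp ((T : ℂ) * μ) * ((j.factorial : ℂ)⁻¹ * (T : ℂ) ^ j)) • (N ^ j *ᵥ w) := by
      intro T
      set c : ℂ := (T : ℂ) with hc
      have hsplit : c • M = c • N + (c * μ) • (1 : Matrix (Fin n) (Fin n) ℂ) := by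
        rw [hNdef, smul_sub, smul_smul, sub_add_cancel]
      have hcomm : Commute (c • N) ((c * μ) • (1 : Matrix (Fin n) (Fin n) ℂ)) :=
        ((Commute.one_right (c • N)).smul_right (c * μ))
      have hexp1 : NormedSpace.exp ((c * μ) • (1 : Matrix (Fin n) (Fin n) ℂ))
          = Complex.exp (c * μ) • (1 : Matrix (Fin n) (Fin n) ℂ) := by
        rw [← Algebra.algebraMap_eq_smul_one, ← Algebra.algebraMap_eq_smul_one,
          Complex.exp_eq_exp_ℂ]
        exact (NormedSpace.map_exp (algebraMap ℂ (Matrix (Fin n) (Fin n) ℂ))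
            (continuous_algebraMap ℂ _) (c * μ)).symm
      rw [hsplit, Matrix.exp_add_of_commute _ _ hcomm, hexp1, Matrix.mul_smul, mul_one,
        Matrix.smul_mulVec]
      have hexpN : NormedSpace.exp (c • N) *ᵥ w
          = ∑ j ∈ Finset.range K, ((j.factorial : ℂ)⁻¹ * c ^ j) • (N ^ j *ᵥ w) := by
        let L0 : Matrix (Fin n) (Fin n) ℂ →ₗ[ℂ] (Fin n → ℂ) :=
          { toFun := fun X => X *ᵥ w
            map_add' := fun X Y => Matrix.add_mulVec X Y w
            map_smul' := fun a X => Matrix.smul_mulVec a X w }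
        let L := LinearMap.toContinuousLinearMap L0
        have hLapply : ∀ X : Matrix (Fin n) (Fin n) ℂ, L X = X *ᵥ w := fun _ => rfl
        have hsum : Summable fun j : ℕ => ((j.factorial : ℂ)⁻¹) • (c • N) ^ j :=
          NormedSpace.expSeries_summable' (𝕂 := ℂ) (c • N)
        rw [NormedSpace.exp_eq_tsum (𝕂 := ℂ), ← hLapply, ContinuousLinearMap.map_tsum L hsum]
        rw [tsum_eq_sum (s := Finset.range K) ?_]
        · refine Finset.sum_congr rfl fun j _ => ?_
          rw [_root_.map_smul, hLapply, smul_pow, Matrix.smul_mulVec, smul_smul]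
        · intro j hj
          have hjK : K ≤ j := le_of_not_gt fun hlt => hj (Finset.mem_range.mpr hlt)
          have hzero : N ^ j *ᵥ w = 0 := by
            have hp : N ^ j = N ^ (j - K) * N ^ K := by
              rw [← pow_add]; congr 1; omega
            rw [hp, ← Matrix.mulVec_mulVec, hNw, Matrix.mulVec_zero]
          rw [_root_.map_smul, hLapply, smul_pow, Matrix.smul_mulVec, hzero, smul_zero, smul_zero]
      rw [hexpN, Finset.smul_sum]
      refine Finset.sum_congr rfl fun j _ => ?_
      rw [smul_smul]
    have hT := tendsto_finset_sum (Finset.range K)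
      (fun j _ => (aux_coeff_tendsto μ hμ j).smul_const (N ^ j *ᵥ w))
    simp only [zero_smul, Finset.sum_const_zero] at hT
    exact Tendsto.congr (fun T => (hrep T).symm) hT
  · simp only [Matrix.mulVec_zero]
    exact tendsto_const_nhds
  · intro x y hx hy
    have := hx.add hy
    simp only [add_zero] at this
    exact Tendsto.congr (fun T => (Matrix.mulVec_add _ _ _).symm) this

open Filter Topology in
private lemma aux_entry_tendsto {n : ℕ} (A : Matrix (Fin n) (Fin n) ℝ)
    (h : ∀ μ : ℂ, μ ∈ spectrum ℂ (A.map (algebraMap ℝ ℂ)) → μ.re < 0) (p q : Fin n) :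
    Tendsto (fun T : ℝ => (NormedSpace.exp (T • A)) p q) atTop (𝓝 0) := by
  letI : SeminormedRing (Matrix (Fin n) (Fin n) ℝ) := Matrix.linftyOpSemiNormedRing
  letI : NormedRing (Matrix (Fin n) (Fin n) ℝ) := Matrix.linftyOpNormedRing
  letI : NormedAlgebra ℝ (Matrix (Fin n) (Fin n) ℝ) := Matrix.linftyOpNormedAlgebra
  letI : NormedAlgebra ℚ (Matrix (Fin n) (Fin n) ℝ) := Matrix.linftyOpNormedAlgebra
  letI : SeminormedRing (Matrix (Fin n) (Fin n) ℂ) := Matrix.linftyOpSemiNormedRing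
  letI : NormedRing (Matrix (Fin n) (Fin n) ℂ) := Matrix.linftyOpNormedRing
  letI : NormedAlgebra ℝ (Matrix (Fin n) (Fin n) ℂ) := Matrix.linftyOpNormedAlgebra
  letI : NormedAlgebra ℂ (Matrix (Fin n) (Fin n) ℂ) := Matrix.linftyOpNormedAlgebra
  set M : Matrix (Fin n) (Fin n) ℂ := A.map (algebraMap ℝ ℂ) with hM
  have hmap : ∀ T : ℝ, (NormedSpace.exp (T • A)).map (algebraMap ℝ ℂ)
      = NormedSpace.exp ((T : ℂ) • M) := by
    intro T
    have hcont : Continuous ((algebraMap ℝ ℂ).mapMatrix :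
        Matrix (Fin n) (Fin n) ℝ →+* Matrix (Fin n) (Fin n) ℂ) := by
      have : (⇑((algebraMap ℝ ℂ).mapMatrix :
          Matrix (Fin n) (Fin n) ℝ →+* Matrix (Fin n) (Fin n) ℂ))
          = fun X : Matrix (Fin n) (Fin n) ℝ => X.map (algebraMap ℝ ℂ) :=
        funext fun X => RingHom.mapMatrix_apply _ _
      rw [this]
      exact Continuous.matrix_map continuous_id Complex.continuous_ofReal
    have h1 : ((algebraMap ℝ ℂ).mapMatrix : Matrix (Fin n) (Fin n) ℝ →+*
          Matrix (Fin n) (Fin n) ℂ) (NormedSpace.exp (T • A))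
        = NormedSpace.exp (((algebraMap ℝ ℂ).mapMatrix) (T • A)) :=
      NormedSpace.map_exp _ hcont _
    have h2 : ((algebraMap ℝ ℂ).mapMatrix : Matrix (Fin n) (Fin n) ℝ →+*
          Matrix (Fin n) (Fin n) ℂ) (T • A) = (T : ℂ) • M := by
      ext p' q'
      simp [RingHom.mapMatrix_apply, Matrix.map_apply, hM]
    have h3 : NormedSpace.exp ((T : ℂ) • M) = NormedSpace.exp ((T : ℂ) • M) :=
      rfl
    calc (NormedSpace.exp (T • A)).map (algebraMap ℝ ℂ)
        = ((algebraMap ℝ ℂ).mapMatrix : Matrix (Fin n) (Fin n) ℝ →+*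
            Matrix (Fin n) (Fin n) ℂ) (NormedSpace.exp (T • A)) :=
          (RingHom.mapMatrix_apply _ _).symm
      _ = NormedSpace.exp (((algebraMap ℝ ℂ).mapMatrix) (T • A)) := h1
      _ = NormedSpace.exp ((T : ℂ) • M) := by rw [h2]
      _ = NormedSpace.exp ((T : ℂ) • M) := h3
  have hvec := aux_mulVec_tendsto M h (Pi.single q 1)
  have hentry : Tendsto (fun T : ℝ => NormedSpace.exp ((T : ℂ) • M) p q) atTop (𝓝 0) := by
    have h4 := (tendsto_pi_nhds.mp hvec) p
    simpa [Matrix.mulVec_single] using h4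
  have heq : ∀ T : ℝ, (NormedSpace.exp (T • A)) p q
      = (NormedSpace.exp ((T : ℂ) • M) p q).re := by
    intro T
    rw [← hmap T]
    simp [Matrix.map_apply]
  simp_rw [heq]
  have h5 := (Complex.continuous_re.tendsto 0).comp hentry
  exact h5

/-- If `A` is Hurwitz and `C * exp(tA)` is entrywise nonnegative for all `t ≥ 0`, then
`−C A⁻¹` is entrywise nonnegative. -/
theorem stmt_10 {n k : ℕ} (A : Matrix (Fin n) (Fin n) ℝ) (C : Matrix (Fin k) (Fin n) ℝ)
    (hHurwitz : ∀ μ : ℂ, μ ∈ spectrum ℂ (A.map (algebraMap ℝ ℂ)) → μ.re < 0)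
    (hpos : ∀ t : ℝ, 0 ≤ t → ∀ i j, 0 ≤ (C * NormedSpace.exp (t • A)) i j) :
    ∀ i j, 0 ≤ (-(C * A⁻¹)) i j := by
  classical
  intro i j
  letI : SeminormedRing (Matrix (Fin n) (Fin n) ℝ) := Matrix.linftyOpSemiNormedRing
  letI : NormedRing (Matrix (Fin n) (Fin n) ℝ) := Matrix.linftyOpNormedRing
  letI : NormedAlgebra ℝ (Matrix (Fin n) (Fin n) ℝ) := Matrix.linftyOpNormedAlgebra
  letI : NormedAlgebra ℚ (Matrix (Fin n) (Fin n) ℝ) := Matrix.linftyOpNormedAlgebra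
  -- A is invertible
  have hdetA : IsUnit A.det := by
    have h0 : (0 : ℂ) ∉ spectrum ℂ (A.map (algebraMap ℝ ℂ)) := fun hc => by
      have := hHurwitz 0 hc
      simp at this
    have hUnit : IsUnit (A.map (algebraMap ℝ ℂ)) := by
      by_contra hne
      exact h0 (spectrum.zero_mem_iff ℂ |>.mpr hne)
    have hdet := (Matrix.isUnit_iff_isUnit_det _).mp hUnit
    rw [show A.map ⇑(algebraMap ℝ ℂ) = (algebraMap ℝ ℂ).mapMatrix A from rfl,
      ← RingHom.map_det] at hdet
    have hne : (algebraMap ℝ ℂ) A.det ≠ 0 := hdet.ne_zero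
    rw [isUnit_iff_ne_zero]
    intro hc
    exact hne (by rw [hc, map_zero])
  have hAinv : A * A⁻¹ = 1 := Matrix.mul_nonsing_inv A hdetA
  -- derivative of exp(tA) * A⁻¹
  have hderiv : ∀ t : ℝ, HasDerivAt (fun u : ℝ => NormedSpace.exp (u • A) * A⁻¹)
      (NormedSpace.exp (t • A)) t := by
    intro t
    have hd := (hasDerivAt_exp_smul_const (𝕂 := ℝ) A t).mul_const A⁻¹
    simp only [mul_assoc, hAinv, mul_one] at hd
    exact hd
  have hcont : Continuous fun t : ℝ => NormedSpace.exp (t • A) :=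
    NormedSpace.exp_continuous.comp (continuous_id.smul continuous_const)
  have key : ∀ T : ℝ, (∫ t in (0 : ℝ)..T, NormedSpace.exp (t • A))
      = NormedSpace.exp (T • A) * A⁻¹ - A⁻¹ := by
    intro T
    have hint := intervalIntegral.integral_eq_sub_of_hasDerivAt
      (f := fun u : ℝ => NormedSpace.exp (u • A) * A⁻¹)
      (fun t _ => hderiv t) (hcont.intervalIntegrable 0 T)
    simpa [zero_smul, NormedSpace.exp_zero, one_mul] using hint
  -- entry evaluation as a continuous linear map
  let E : Matrix (Fin n) (Fin n) ℝ →ₗ[ℝ] ℝ :=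
    { toFun := fun X => (C * X) i j
      map_add' := fun X Y => by simp [Matrix.mul_add]
      map_smul' := fun c X => by simp [Matrix.mul_smul] }
  let Ec := LinearMap.toContinuousLinearMap E
  have hEc : ∀ X : Matrix (Fin n) (Fin n) ℝ, Ec X = (C * X) i j := fun _ => rfl
  -- for every T ≥ 0, (C * A⁻¹) i j ≤ (C * (exp(TA) * A⁻¹)) i j
  have hineq : ∀ T : ℝ, 0 ≤ T → (C * A⁻¹) i j ≤ (C * (NormedSpace.exp (T • A) * A⁻¹)) i j := by
    intro T hT
    have hnn : 0 ≤ Ec (∫ t in (0 : ℝ)..T, NormedSpace.exp (t • A)) := by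
      refine le_of_le_of_eq ?_ (ContinuousLinearMap.intervalIntegral_comp_comm Ec (hcont.intervalIntegrable 0 T))
      refine intervalIntegral.integral_nonneg hT fun t ht => ?_
      show 0 ≤ (C * NormedSpace.exp (t • A)) i j
      exact hpos t ht.1 i j
    rw [key T, map_sub, hEc, hEc] at hnn
    linarith
  -- the limit as T → ∞
  have hlim : Filter.Tendsto (fun T : ℝ => (C * (NormedSpace.exp (T • A) * A⁻¹)) i j)
      Filter.atTop (nhds 0) := by
    have hform : ∀ T : ℝ, (C * (NormedSpace.exp (T • A) * A⁻¹)) i j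
        = ∑ p : Fin n, C i p * ∑ q : Fin n, (NormedSpace.exp (T • A)) p q * A⁻¹ q j := by
      intro T
      simp [Matrix.mul_apply, Finset.mul_sum]
    simp_rw [hform]
    have hzero : (0 : ℝ) = ∑ p : Fin n, C i p * ∑ q : Fin n, (0 : ℝ) * A⁻¹ q j := by simp
    rw [hzero]
    refine tendsto_finset_sum _ fun p _ => Filter.Tendsto.const_mul _ ?_
    refine tendsto_finset_sum _ fun q _ => ?_
    exact (aux_entry_tendsto A hHurwitz p q).mul_const _
  have hfin : (C * A⁻¹) i j ≤ 0 :=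
    ge_of_tendsto hlim (Filter.eventually_atTop.mpr ⟨0, fun T hT => hineq T hT⟩)
  simp only [Matrix.neg_apply]
  linarith
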